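/- Let D ⊆ ℂ^N be a domain, μ₁ an admissible weight on D, U a bounded open set with closure contained in D, and μ₂ a weight on U. If both μ₁ and μ₂ are integrable over U, then with μ̃₁ defined as max(μ₁,μ₂) on U and μ₁ elsewhere, the spaces L²_H(D,μ₁) and L²_H(D,μ̃₁) coincide as sets and the two norms are equivalent on this space. In particular there is C > 0 with ‖f‖²_{μ̃₁} ≤ C ‖f‖²_{μ₁} for all f ∈ L²_H(D,μ₁). -/

import Mathlib

open MeasureTheory Filter
open scoped Classical

/-- Lebesgue measure on `ℂ^N` (transported to `EuclideanSpace ℂ (Fin N)` via the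
defeq with `Fin N → ℂ`). -/
noncomputable instance {N : ℕ} : MeasureSpace (EuclideanSpace ℂ (Fin N)) :=
  { volume := (volume : Measure (Fin N → ℂ)).map (MeasurableEquiv.toLp 2 (Fin N → ℂ)) }

/-- The weighted L² norm `‖f‖_μ = (∫_D |f|² μ)^{1/2}` on a domain `D ⊆ ℂ^N`. -/
noncomputable def wnorm {N : ℕ} (D : Set (EuclideanSpace ℂ (Fin N)))
    (μ : EuclideanSpace ℂ (Fin N) → ℝ) (f : EuclideanSpace ℂ (Fin N) → ℂ) : ℝ :=
  Real.sqrt (∫ z in D, ‖f z‖ ^ 2 * μ z)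

/-- `L²_H(D,μ)`: holomorphic functions on `D` that are square-integrable against `μ`. -/
def L2H {N : ℕ} (D : Set (EuclideanSpace ℂ (Fin N)))
    (μ : EuclideanSpace ℂ (Fin N) → ℝ) : Set (EuclideanSpace ℂ (Fin N) → ℂ) :=
  {f | DifferentiableOn ℂ f D ∧ IntegrableOn (fun z => ‖f z‖ ^ 2 * μ z) D}

/-- Every point evaluation `E_z : f ↦ f(z)` is continuous on `L²_H(D,μ)`. -/
def EvalContinuous {N : ℕ} (D : Set (EuclideanSpace ℂ (Fin N)))
    (μ : EuclideanSpace ℂ (Fin N) → ℝ) : Prop :=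
  ∀ z ∈ D, ∃ C : ℝ, ∀ f ∈ L2H D μ, ‖f z‖ ≤ C * wnorm D μ f

/-- `L²_H(D,μ)` is closed in `L²(D,μ)`: any `g ∈ L²(D,μ)` that is a norm-limit of a sequence
from `L²_H(D,μ)` agrees a.e. on `D` with a member of `L²_H(D,μ)`. -/
def ClosedInL2 {N : ℕ} (D : Set (EuclideanSpace ℂ (Fin N)))
    (μ : EuclideanSpace ℂ (Fin N) → ℝ) : Prop :=
  ∀ F : ℕ → (EuclideanSpace ℂ (Fin N) → ℂ), (∀ n, F n ∈ L2H D μ) →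
    ∀ g : EuclideanSpace ℂ (Fin N) → ℂ,
      IntegrableOn (fun z => ‖g z‖ ^ 2 * μ z) D →
      Tendsto (fun n => wnorm D μ (fun z => F n z - g z)) atTop (nhds 0) →
      ∃ g' ∈ L2H D μ, ∀ᵐ z ∂(volume.restrict D), g z = g' z

/-- An admissible weight: positive and measurable, point evaluations are continuous on
`L²_H(D,μ)`, and `L²_H(D,μ)` is closed in `L²(D,μ)`. -/
def Admissible {N : ℕ} (D : Set (EuclideanSpace ℂ (Fin N)))
    (μ : EuclideanSpace ℂ (Fin N) → ℝ) : Prop :=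
  Measurable μ ∧ (∀ z ∈ D, 0 < μ z) ∧ EvalContinuous D μ ∧ ClosedInL2 D μ

open scoped NNReal ENNReal

instance {N : ℕ} : (volume : Measure (EuclideanSpace ℂ (Fin N))).IsOpenPosMeasure :=
  (PiLp.continuous_toLp 2 _).isOpenPosMeasure_map (MeasurableEquiv.toLp 2 (Fin N → ℂ)).surjective
instance {N : ℕ} : BorelSpace (EuclideanSpace ℂ (Fin N)) :=
  inferInstance

theorem eqOn_of_ae {N : ℕ} {D : Set (EuclideanSpace ℂ (Fin N))} (hD : IsOpen D)
    {f g : EuclideanSpace ℂ (Fin N) → ℂ} (hf : ContinuousOn f D) (hg : ContinuousOn g D)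
    (h : ∀ᵐ z ∂(volume.restrict D), f z = g z) : Set.EqOn f g D := by
  have hV : IsOpen {z | z ∈ D ∧ f z ≠ g z} := by
    have := (hf.sub hg).isOpen_inter_preimage (t := ({0}ᶜ : Set ℂ)) hD isOpen_compl_singleton
    convert this using 1
    ext z; simp only [Set.mem_setOf_eq, Set.mem_inter_iff, Set.mem_preimage,
      Set.mem_compl_iff, Set.mem_singleton_iff, sub_eq_zero, Pi.sub_apply]
  have hnull : volume {z | z ∈ D ∧ f z ≠ g z} = 0 := by
    have h0 : (volume.restrict D) {z | f z ≠ g z} = 0 := h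
    have h1 := measure_mono_null (μ := volume.restrict D)
      (s := {z | z ∈ D ∧ f z ≠ g z}) (t := {z | f z ≠ g z}) (fun z hz => hz.2) h0
    rw [Measure.restrict_apply₀' hD.measurableSet.nullMeasurableSet] at h1
    have : {z | z ∈ D ∧ f z ≠ g z} ∩ D = {z | z ∈ D ∧ f z ≠ g z} := by
      ext z; simp only [Set.mem_inter_iff, Set.mem_setOf_eq]; tauto
    rwa [this] at h1
  have hemp := (hV.measure_eq_zero_iff (volume)).mp hnull
  intro z hz
  by_contra hne
  have : z ∈ ({z | z ∈ D ∧ f z ≠ g z}) := ⟨hz, hne⟩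
  rw [hemp] at this
  exact this

/-- Uniform bound on evaluations over `U`, via Banach–Steinhaus. -/
theorem uniform_bound {N : ℕ} {D U : Set (EuclideanSpace ℂ (Fin N))}
    (hD : IsOpen D) {μ₁ : EuclideanSpace ℂ (Fin N) → ℝ}
    (hμ₁ : Admissible D μ₁)
    (hUne : U.Nonempty) (hUbdd : Bornology.IsBounded U) (hUcl : closure U ⊆ D) :
    ∃ M : ℝ, 0 ≤ M ∧ ∀ f ∈ L2H D μ₁, ∀ z ∈ U, ‖f z‖ ≤ M * wnorm D μ₁ f := by
  obtain ⟨hmeas, hpos, heval, hclosed⟩ := hμ₁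
  set ν : Measure (EuclideanSpace ℂ (Fin N)) := volume.restrict D with hν
  set dens : EuclideanSpace ℂ (Fin N) → ℝ≥0 := fun z => Real.toNNReal (μ₁ z) with hdens
  set m : Measure (EuclideanSpace ℂ (Fin N)) :=
    ν.withDensity (fun z => (dens z : ℝ≥0∞)) with hm
  have hdensmeas : Measurable dens := hmeas.real_toNNReal
  have hUD : U ⊆ D := subset_closure.trans hUcl
  have haeD : ∀ᵐ z ∂ν, z ∈ D := ae_restrict_mem hD.measurableSet
  have haepos : ∀ᵐ z ∂ν, 0 < μ₁ z := haeD.mono fun z hz => hpos z hz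
  have hae_iff : ∀ {f g : EuclideanSpace ℂ (Fin N) → ℂ}, (f =ᵐ[m] g ↔ f =ᵐ[ν] g) := by
    intro f g
    refine withDensity_ae_eq (hdensmeas.coe_nnreal_ennreal.aemeasurable) ?_
    filter_upwards [haepos] with z hz
    simp only [ne_eq, ENNReal.coe_eq_zero, hdens, Real.toNNReal_eq_zero, not_le]
    exact hz
  have hac1 : m ≪ ν := withDensity_absolutelyContinuous _ _
  -- integrability bridge
  have hint_iff : ∀ g : EuclideanSpace ℂ (Fin N) → ℂ,
      (Integrable (fun z => ‖g z‖ ^ 2) m ↔ IntegrableOn (fun z => ‖g z‖ ^ 2 * μ₁ z) D) := by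
    intro g
    refine Iff.trans (integrable_withDensity_iff_integrable_smul hdensmeas) ?_
    refine integrable_congr ?_
    filter_upwards [haepos] with z hz
    simp [NNReal.smul_def, hdens, Real.coe_toNNReal _ hz.le, mul_comm]
  have hsm_of : ∀ {g : EuclideanSpace ℂ (Fin N) → ℂ}, ContinuousOn g D →
      AEStronglyMeasurable g ν := fun hg => hg.aestronglyMeasurable hD.measurableSet
  have hmemLp : ∀ {f : EuclideanSpace ℂ (Fin N) → ℂ}, f ∈ L2H D μ₁ → MemLp f 2 m := by
    intro f hf
    exact (memLp_two_iff_integrable_sq_norm ((hsm_of hf.1.continuousOn).mono_ac hac1)).mpr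
      ((hint_iff f).mpr hf.2)
  have hintOn_of_memLp : ∀ {f : EuclideanSpace ℂ (Fin N) → ℂ}, AEStronglyMeasurable f m →
      MemLp f 2 m → IntegrableOn (fun z => ‖f z‖ ^ 2 * μ₁ z) D := by
    intro f hsm hf
    exact (hint_iff f).mp ((memLp_two_iff_integrable_sq_norm hsm).mp hf)
  -- norm bridge
  have hnorm_eq : ∀ (x : Lp ℂ 2 m) (g : EuclideanSpace ℂ (Fin N) → ℂ),
      ((x : EuclideanSpace ℂ (Fin N) → ℂ) =ᵐ[ν] g) → wnorm D μ₁ g = ‖x‖ := by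
    intro x g hgae
    have h1 : RCLike.re (inner (𝕜 := ℂ) x x) = ‖x‖ ^ 2 := inner_self_eq_norm_sq (𝕜 := ℂ) x
    have h2 : (inner (𝕜 := ℂ) x x) =
        ∫ a, inner (𝕜 := ℂ) ((x : EuclideanSpace ℂ (Fin N) → ℂ) a)
          ((x : EuclideanSpace ℂ (Fin N) → ℂ) a) ∂m := L2.inner_def x x
    have h3 := integral_re (μ := m)
      (f := fun a => inner (𝕜 := ℂ) ((x : EuclideanSpace ℂ (Fin N) → ℂ) a)
        ((x : EuclideanSpace ℂ (Fin N) → ℂ) a)) (L2.integrable_inner x x)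
    have h4 : (fun a => RCLike.re (inner (𝕜 := ℂ) ((x : EuclideanSpace ℂ (Fin N) → ℂ) a)
        ((x : EuclideanSpace ℂ (Fin N) → ℂ) a)))
        = fun a => ‖(x : EuclideanSpace ℂ (Fin N) → ℂ) a‖ ^ 2 := by
      funext a; exact inner_self_eq_norm_sq (𝕜 := ℂ) _
    have h5 : ∫ a, ‖(x : EuclideanSpace ℂ (Fin N) → ℂ) a‖ ^ 2 ∂m = ‖x‖ ^ 2 := by
      rw [← h4, h3, ← h2, h1]
    have h6 : ∫ a, ‖(x : EuclideanSpace ℂ (Fin N) → ℂ) a‖ ^ 2 ∂m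
        = ∫ z in D, ‖g z‖ ^ 2 * μ₁ z := by
      refine Eq.trans (integral_withDensity_eq_integral_smul hdensmeas
        (fun a => ‖(x : EuclideanSpace ℂ (Fin N) → ℂ) a‖ ^ 2)) ?_
      refine integral_congr_ae ?_
      filter_upwards [haepos, hgae] with z hz hz2
      simp [NNReal.smul_def, hdens, Real.coe_toNNReal _ hz.le, hz2, mul_comm]
    rw [wnorm, ← h6, h5, Real.sqrt_sq (norm_nonneg x)]
  -- closure of L2H under operations
  have hT0 : (fun _ => (0 : ℂ)) ∈ L2H D μ₁ := by
    constructor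
    · exact differentiableOn_const 0
    · have : (fun z => ‖(0 : ℂ)‖ ^ 2 * μ₁ z) = fun _ => (0 : ℝ) := by funext z; simp
      rw [IntegrableOn, this]
      exact integrable_zero _ _ _
  have hadd : ∀ {f g : EuclideanSpace ℂ (Fin N) → ℂ}, f ∈ L2H D μ₁ → g ∈ L2H D μ₁ →
      (fun z => f z + g z) ∈ L2H D μ₁ := by
    intro f g hf hg
    refine ⟨hf.1.add hg.1, ?_⟩
    have hsm : AEStronglyMeasurable (fun z => f z + g z) m :=
      ((hsm_of hf.1.continuousOn).mono_ac hac1).add ((hsm_of hg.1.continuousOn).mono_ac hac1)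
    exact hintOn_of_memLp hsm ((hmemLp hf).add (hmemLp hg))
  have hsmul : ∀ (c : ℂ) {f : EuclideanSpace ℂ (Fin N) → ℂ}, f ∈ L2H D μ₁ →
      (fun z => c • f z) ∈ L2H D μ₁ := by
    intro c f hf
    refine ⟨hf.1.const_smul c, ?_⟩
    have hsm : AEStronglyMeasurable (fun z => c • f z) m :=
      ((hsm_of hf.1.continuousOn).mono_ac hac1).const_smul c
    exact hintOn_of_memLp hsm ((hmemLp hf).const_smul c)
  -- the submodule
  let T : Submodule ℂ (Lp ℂ 2 m) :=
    { carrier := {x | ∃ f ∈ L2H D μ₁, ((x : Lp ℂ 2 m) : EuclideanSpace ℂ (Fin N) → ℂ) =ᵐ[ν] f}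
      zero_mem' := ⟨fun _ => 0, hT0, hae_iff.mp (Lp.coeFn_zero ℂ 2 m)⟩
      add_mem' := by
        rintro x y ⟨f, hf, hfx⟩ ⟨g, hg, hgy⟩
        refine ⟨fun z => f z + g z, hadd hf hg, ?_⟩
        have h1 : ((x + y : Lp ℂ 2 m) : EuclideanSpace ℂ (Fin N) → ℂ) =ᵐ[ν]
            (x : EuclideanSpace ℂ (Fin N) → ℂ) + (y : EuclideanSpace ℂ (Fin N) → ℂ) :=
          hae_iff.mp (Lp.coeFn_add x y)
        filter_upwards [h1, hfx, hgy] with z h1 h2 h3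
        rw [h1, Pi.add_apply, h2, h3]
      smul_mem' := by
        rintro c x ⟨f, hf, hfx⟩
        refine ⟨fun z => c • f z, hsmul c hf, ?_⟩
        have h1 : ((c • x : Lp ℂ 2 m) : EuclideanSpace ℂ (Fin N) → ℂ) =ᵐ[ν]
            c • (x : EuclideanSpace ℂ (Fin N) → ℂ) := hae_iff.mp (Lp.coeFn_smul c x)
        filter_upwards [h1, hfx] with z h1 h2
        rw [h1, Pi.smul_apply, h2] }
  -- T is closed
  have hTclosed : IsClosed (T : Set (Lp ℂ 2 m)) := by
    apply IsSeqClosed.isClosed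
    intro y x hy hyx
    choose f hfmem hfae using fun n => hy n
    have hgint : IntegrableOn
        (fun z => ‖(x : EuclideanSpace ℂ (Fin N) → ℂ) z‖ ^ 2 * μ₁ z) D :=
      hintOn_of_memLp (Lp.aestronglyMeasurable x) (Lp.memLp x)
    have hwn : ∀ n, wnorm D μ₁
        (fun z => f n z - (x : EuclideanSpace ℂ (Fin N) → ℂ) z) = ‖y n - x‖ := by
      intro n
      refine hnorm_eq (y n - x) _ ?_
      have h1 : ((y n - x : Lp ℂ 2 m) : EuclideanSpace ℂ (Fin N) → ℂ) =ᵐ[ν]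
          (y n : EuclideanSpace ℂ (Fin N) → ℂ) - (x : EuclideanSpace ℂ (Fin N) → ℂ) :=
        hae_iff.mp (Lp.coeFn_sub (y n) x)
      filter_upwards [h1, hfae n] with z h1 h2
      rw [h1, Pi.sub_apply, h2]
    have htend : Tendsto (fun n => wnorm D μ₁
        (fun z => f n z - (x : EuclideanSpace ℂ (Fin N) → ℂ) z)) atTop (nhds 0) := by
      have := (tendsto_iff_norm_sub_tendsto_zero).mp hyx
      simpa only [hwn] using this
    obtain ⟨g', hg', hgg'⟩ := hclosed f hfmem _ hgint htend
    exact ⟨g', hg', hgg'⟩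
  haveI : CompleteSpace T := hTclosed.completeSpace_coe
  -- representative function
  have hrep : ∀ x : T, ∃ f, f ∈ L2H D μ₁ ∧
      (((x : Lp ℂ 2 m) : EuclideanSpace ℂ (Fin N) → ℂ) =ᵐ[ν] f) := fun x => x.2
  choose rep hrep1 hrep2 using hrep
  have hrep_eq : ∀ (x : T) (f : EuclideanSpace ℂ (Fin N) → ℂ), f ∈ L2H D μ₁ →
      (((x : Lp ℂ 2 m) : EuclideanSpace ℂ (Fin N) → ℂ) =ᵐ[ν] f) →
      Set.EqOn (rep x) f D := by
    intro x f hf hae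
    exact eqOn_of_ae hD (hrep1 x).1.continuousOn hf.1.continuousOn ((hrep2 x).symm.trans hae)
  have hrep_norm : ∀ x : T, wnorm D μ₁ (rep x) = ‖x‖ := fun x =>
    hnorm_eq (x : Lp ℂ 2 m) (rep x) (hrep2 x)
  -- evaluation functionals
  have hev : ∀ i : U, ∃ e : T →L[ℂ] ℂ, ∀ x : T, e x = rep x (i : EuclideanSpace ℂ (Fin N)) := by
    intro i
    obtain ⟨C, hC⟩ := heval i (hUD i.2)
    have hlin_add : ∀ x y : T, rep (x + y) (i : EuclideanSpace ℂ (Fin N)) =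
        rep x (i : EuclideanSpace ℂ (Fin N)) + rep y (i : EuclideanSpace ℂ (Fin N)) := by
      intro x y
      have h1 : (((x + y : T) : Lp ℂ 2 m) : EuclideanSpace ℂ (Fin N) → ℂ) =ᵐ[ν]
          fun z => rep x z + rep y z := by
        have ha : (((x + y : T) : Lp ℂ 2 m) : EuclideanSpace ℂ (Fin N) → ℂ) =ᵐ[ν]
            ((x : Lp ℂ 2 m) : EuclideanSpace ℂ (Fin N) → ℂ) +
            ((y : Lp ℂ 2 m) : EuclideanSpace ℂ (Fin N) → ℂ) := by
          have := hae_iff.mp (Lp.coeFn_add (x : Lp ℂ 2 m) (y : Lp ℂ 2 m))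
          exact this
        filter_upwards [ha, hrep2 x, hrep2 y] with z h1 h2 h3
        rw [h1, Pi.add_apply, h2, h3]
      exact hrep_eq (x + y) _ (hadd (hrep1 x) (hrep1 y)) h1 (hUD i.2)
    have hlin_smul : ∀ (c : ℂ) (x : T), rep (c • x) (i : EuclideanSpace ℂ (Fin N)) =
        c • rep x (i : EuclideanSpace ℂ (Fin N)) := by
      intro c x
      have h1 : (((c • x : T) : Lp ℂ 2 m) : EuclideanSpace ℂ (Fin N) → ℂ) =ᵐ[ν]
          fun z => c • rep x z := by
        have ha : (((c • x : T) : Lp ℂ 2 m) : EuclideanSpace ℂ (Fin N) → ℂ) =ᵐ[ν]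
            c • ((x : Lp ℂ 2 m) : EuclideanSpace ℂ (Fin N) → ℂ) := by
          have := hae_iff.mp (Lp.coeFn_smul c (x : Lp ℂ 2 m))
          exact this
        filter_upwards [ha, hrep2 x] with z h1 h2
        rw [h1, Pi.smul_apply, h2]
      exact hrep_eq (c • x) _ (hsmul c (hrep1 x)) h1 (hUD i.2)
    refine ⟨LinearMap.mkContinuous
      { toFun := fun x => rep x (i : EuclideanSpace ℂ (Fin N))
        map_add' := hlin_add
        map_smul' := hlin_smul } C ?_, fun x => rfl⟩
    intro x
    have := hC (rep x) (hrep1 x)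
    rwa [hrep_norm x] at this
  choose e he using hev
  -- pointwise boundedness
  have hptwise : ∀ x : T, ∃ B : ℝ, ∀ i : U, ‖e i x‖ ≤ B := by
    intro x
    have hKc : IsCompact (closure U) := hUbdd.isCompact_closure
    have hKne : (closure U).Nonempty := hUne.mono subset_closure
    have hcont : ContinuousOn (fun z => ‖rep x z‖) (closure U) :=
      ((hrep1 x).1.continuousOn.mono hUcl).norm
    obtain ⟨z₀, _, hz₀⟩ := hKc.exists_isMaxOn hKne hcont
    refine ⟨‖rep x z₀‖, fun i => ?_⟩
    rw [he i x]
    exact hz₀ (subset_closure i.2)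
  -- Banach–Steinhaus
  obtain ⟨C', hC'⟩ := banach_steinhaus (g := e) (fun x => hptwise x)
  refine ⟨max C' 0, le_max_right _ _, ?_⟩
  intro f hf z hz
  have hfm : MemLp f 2 m := hmemLp hf
  have hxT : hfm.toLp f ∈ T := ⟨f, hf, hae_iff.mp (MemLp.coeFn_toLp hfm)⟩
  set x : T := ⟨hfm.toLp f, hxT⟩ with hx
  have hfeq : rep x z = f z :=
    hrep_eq x f hf (hae_iff.mp (MemLp.coeFn_toLp hfm)) (hUD hz)
  have h1 : ‖f z‖ = ‖e ⟨z, hz⟩ x‖ := by rw [he ⟨z, hz⟩ x, hfeq]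
  have h2 : ‖e ⟨z, hz⟩ x‖ ≤ ‖e ⟨z, hz⟩‖ * ‖x‖ := (e ⟨z, hz⟩).le_opNorm x
  have h3 : ‖e ⟨z, hz⟩‖ * ‖x‖ ≤ max C' 0 * ‖x‖ :=
    mul_le_mul_of_nonneg_right (le_trans (hC' ⟨z, hz⟩) (le_max_left _ _)) (norm_nonneg _)
  have h4 : wnorm D μ₁ f = ‖(x : Lp ℂ 2 m)‖ :=
    hnorm_eq (x : Lp ℂ 2 m) f (hae_iff.mp (MemLp.coeFn_toLp hfm))
  rw [h1, h4]
  exact le_trans h2 h3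

/-- if additionally `μ₂` is integrable over `U`, then `L²_H(D,μ₁)` and
`L²_H(D,μ̃₁)` coincide as sets and the norms are equivalent; in particular
`‖f‖²_{μ̃₁} ≤ C ‖f‖²_{μ₁}` for all `f ∈ L²_H(D,μ₁)`. -/
theorem max_weight_equivalent {N : ℕ} (D U : Set (EuclideanSpace ℂ (Fin N)))
    (hD : IsOpen D) (hDconn : IsConnected D)
    (μ₁ μ₂ : EuclideanSpace ℂ (Fin N) → ℝ)
    (hμ₁ : Admissible D μ₁)
    (hμ₂meas : Measurable μ₂) (hμ₂pos : ∀ z ∈ U, 0 < μ₂ z)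
    (hU : IsOpen U) (hUbdd : Bornology.IsBounded U) (hUcl : closure U ⊆ D)
    (hμ₁int : IntegrableOn μ₁ U) (hμ₂int : IntegrableOn μ₂ U) :
    L2H D μ₁ = L2H D (fun z => if z ∈ U then max (μ₁ z) (μ₂ z) else μ₁ z) ∧
    ∃ C : ℝ, 0 < C ∧ ∀ f ∈ L2H D μ₁,
      (wnorm D μ₁ f) ^ 2 ≤ (wnorm D (fun z => if z ∈ U then max (μ₁ z) (μ₂ z) else μ₁ z) f) ^ 2 ∧
      (wnorm D (fun z => if z ∈ U then max (μ₁ z) (μ₂ z) else μ₁ z) f) ^ 2 ≤ C * (wnorm D μ₁ f) ^ 2 := by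
  rcases Set.eq_empty_or_nonempty U with hUe | hUne
  · have hμteq : (fun z => if z ∈ U then max (μ₁ z) (μ₂ z) else μ₁ z) = μ₁ := by
      funext z; simp [hUe]
    rw [hμteq]
    exact ⟨rfl, 1, one_pos, fun f _ => ⟨le_rfl, by rw [one_mul]⟩⟩
  obtain ⟨M, hM0, hM⟩ := uniform_bound hD hμ₁ hUne hUbdd hUcl
  obtain ⟨hmeas, hpos, heval, hclosed⟩ := hμ₁
  set μt : EuclideanSpace ℂ (Fin N) → ℝ :=
    fun z => if z ∈ U then max (μ₁ z) (μ₂ z) else μ₁ z with hμt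
  have hUD : U ⊆ D := subset_closure.trans hUcl
  have hμtmeas : Measurable μt := Measurable.ite hU.measurableSet (hmeas.max hμ₂meas) hmeas
  have hμtU : ∀ z ∈ U, μt z = max (μ₁ z) (μ₂ z) := by
    intro z hz; simp only [hμt, if_pos hz]
  have hμtnU : ∀ z, z ∉ U → μt z = μ₁ z := by
    intro z hz; simp only [hμt, if_neg hz]
  have hμtpos : ∀ z ∈ D, 0 < μt z := by
    intro z hz; by_cases h : z ∈ U
    · rw [hμtU z h]; exact lt_max_of_lt_left (hpos z hz)
    · rw [hμtnU z h]; exact hpos z hz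
  have hμtge : ∀ z ∈ D, μ₁ z ≤ μt z := by
    intro z hz; by_cases h : z ∈ U
    · rw [hμtU z h]; exact le_max_left _ _
    · rw [hμtnU z h]
  have haeD : ∀ᵐ z ∂(volume.restrict D), z ∈ D := ae_restrict_mem hD.measurableSet
  have hsm : ∀ (f : EuclideanSpace ℂ (Fin N) → ℂ), ContinuousOn f D →
      ∀ (w : EuclideanSpace ℂ (Fin N) → ℝ), Measurable w →
      AEStronglyMeasurable (fun z => ‖f z‖ ^ 2 * w z) (volume.restrict D) := by
    intro f hf w hw
    exact ((hf.norm.pow 2).aestronglyMeasurable hD.measurableSet).mul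
      hw.aestronglyMeasurable.restrict
  have hw0 : ∀ f, 0 ≤ wnorm D μ₁ f := fun f => Real.sqrt_nonneg _
  have hI2 : 0 ≤ ∫ z in U, μ₂ z :=
    integral_nonneg_of_ae ((ae_restrict_mem hU.measurableSet).mono fun z hz => (hμ₂pos z hz).le)
  have key : ∀ f ∈ L2H D μ₁,
      IntegrableOn (fun z => ‖f z‖ ^ 2 * μt z) D ∧
      (∫ z in D, ‖f z‖ ^ 2 * μt z) ≤
        (∫ z in D, ‖f z‖ ^ 2 * μ₁ z) + (M * wnorm D μ₁ f) ^ 2 * ∫ z in U, μ₂ z := by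
    intro f hf
    set B := M * wnorm D μ₁ f with hB
    have hB0 : 0 ≤ B := mul_nonneg hM0 (hw0 f)
    have hfB : ∀ z ∈ U, ‖f z‖ ≤ B := fun z hz => hM f hf z hz
    have hindint : Integrable (U.indicator (fun z => B ^ 2 * μ₂ z)) (volume.restrict D) :=
      (MeasureTheory.IntegrableOn.integrable_indicator (hμ₂int.const_mul (B ^ 2)) hU.measurableSet).integrableOn
    have hGint : IntegrableOn
        (fun z => ‖f z‖ ^ 2 * μ₁ z + U.indicator (fun z => B ^ 2 * μ₂ z) z) D :=
      hf.2.add hindint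
    have hle : ∀ z ∈ D, ‖f z‖ ^ 2 * μt z ≤
        ‖f z‖ ^ 2 * μ₁ z + U.indicator (fun z => B ^ 2 * μ₂ z) z ∧
        0 ≤ ‖f z‖ ^ 2 * μt z := by
      intro z hz
      refine ⟨?_, mul_nonneg (sq_nonneg _) (hμtpos z hz).le⟩
      by_cases h : z ∈ U
      · rw [hμtU z h, Set.indicator_of_mem h]
        have h2 : 0 ≤ μ₂ z := (hμ₂pos z h).le
        have h1 : 0 ≤ μ₁ z := (hpos z hz).le
        rcases max_cases (μ₁ z) (μ₂ z) with ⟨hmx, _⟩ | ⟨hmx, _⟩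
        · rw [hmx]; nlinarith [sq_nonneg B]
        · rw [hmx]
          have hsq : ‖f z‖ ^ 2 ≤ B ^ 2 := by nlinarith [hfB z h, norm_nonneg (f z)]
          nlinarith [mul_le_mul_of_nonneg_right hsq h2, sq_nonneg (‖f z‖)]
      · rw [hμtnU z h, Set.indicator_of_notMem h, add_zero]
    have hintt : IntegrableOn (fun z => ‖f z‖ ^ 2 * μt z) D := by
      refine Integrable.mono hGint (hsm f hf.1.continuousOn μt hμtmeas) ?_
      filter_upwards [haeD] with z hz
      have h := hle z hz
      rw [Real.norm_eq_abs, Real.norm_eq_abs, abs_of_nonneg h.2]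
      exact h.1.trans (le_abs_self _)
    refine ⟨hintt, ?_⟩
    have hmono : (∫ z in D, ‖f z‖ ^ 2 * μt z) ≤
        ∫ z in D, (‖f z‖ ^ 2 * μ₁ z + U.indicator (fun z => B ^ 2 * μ₂ z) z) := by
      refine integral_mono_ae hintt hGint ?_
      filter_upwards [haeD] with z hz; exact (hle z hz).1
    have hsplit : (∫ z in D, (‖f z‖ ^ 2 * μ₁ z + U.indicator (fun z => B ^ 2 * μ₂ z) z))
        = (∫ z in D, ‖f z‖ ^ 2 * μ₁ z) + B ^ 2 * ∫ z in U, μ₂ z := by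
      rw [integral_add hf.2 hindint]
      congr 1
      rw [setIntegral_indicator hU.measurableSet,
        Set.inter_eq_self_of_subset_right hUD, MeasureTheory.integral_const_mul (B ^ 2) μ₂]
    rw [hsplit] at hmono
    exact hmono
  have hsq_eq : ∀ (w : EuclideanSpace ℂ (Fin N) → ℝ) (f : EuclideanSpace ℂ (Fin N) → ℂ),
      (∀ᵐ z ∂(volume.restrict D), 0 ≤ ‖f z‖ ^ 2 * w z) →
      (wnorm D w f) ^ 2 = ∫ z in D, ‖f z‖ ^ 2 * w z := by
    intro w f hnn
    rw [wnorm, Real.sq_sqrt (integral_nonneg_of_ae hnn)]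
  have hset : L2H D μ₁ = L2H D μt := by
    ext f
    constructor
    · intro hf; exact ⟨hf.1, (key f hf).1⟩
    · intro hf
      refine ⟨hf.1, ?_⟩
      refine Integrable.mono hf.2 (hsm f hf.1.continuousOn μ₁ hmeas) ?_
      filter_upwards [haeD] with z hz
      rw [Real.norm_eq_abs, Real.norm_eq_abs,
        abs_of_nonneg (mul_nonneg (sq_nonneg _) (hpos z hz).le),
        abs_of_nonneg (mul_nonneg (sq_nonneg _) (hμtpos z hz).le)]
      exact mul_le_mul_of_nonneg_left (hμtge z hz) (sq_nonneg _)
  refine ⟨hset, 1 + M ^ 2 * ∫ z in U, μ₂ z, ?_, ?_⟩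
  · nlinarith [hI2, sq_nonneg M]
  intro f hf
  have h1 := hsq_eq μ₁ f (haeD.mono fun z hz => mul_nonneg (sq_nonneg _) (hpos z hz).le)
  have h2 := hsq_eq μt f (haeD.mono fun z hz => mul_nonneg (sq_nonneg _) (hμtpos z hz).le)
  constructor
  · rw [h1, h2]
    refine integral_mono_ae hf.2 (key f hf).1 ?_
    filter_upwards [haeD] with z hz
    exact mul_le_mul_of_nonneg_left (hμtge z hz) (sq_nonneg _)
  · calc (wnorm D μt f) ^ 2 = ∫ z in D, ‖f z‖ ^ 2 * μt z := h2
      _ ≤ (∫ z in D, ‖f z‖ ^ 2 * μ₁ z) + (M * wnorm D μ₁ f) ^ 2 * ∫ z in U, μ₂ z :=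
          (key f hf).2
      _ = (1 + M ^ 2 * ∫ z in U, μ₂ z) * (wnorm D μ₁ f) ^ 2 := by rw [← h1]; ring
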